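/- Let K be a field of characteristic different from 2 and let D ∈ K[X] be a polynomial of degree 2 whose leading coefficient is a square in K and which is not a square in K[X]. Then D is Pellian: there exist p, q ∈ K[X] with q ≠ 0 and p² − D·q² = 1. -/

import Mathlib

open Polynomial

/-- A non-square polynomial of degree 2 with square leading coefficient is always Pellian. -/
theorem deg_two_always_pellian {K : Type*} [Field K] (h2 : (2 : K) ≠ 0)
    (D : Polynomial K) (hdeg : D.degree = 2)
    (hlc : ∃ c : K, D.leadingCoeff = c ^ 2)
    (hns : ¬ ∃ E : Polynomial K, D = E ^ 2) :
    ∃ p q : Polynomial K, q ≠ 0 ∧ p ^ 2 - D * q ^ 2 = 1 := by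
  obtain ⟨c, hc⟩ := hlc
  have hD0 : D ≠ 0 := fun h => by simp [h] at hdeg
  have hnd : D.natDegree = 2 := natDegree_eq_of_degree_eq_some hdeg
  have hc2 : D.coeff 2 = c ^ 2 := by
    rw [← hnd] at hc ⊢; rw [← hc]; rfl
  have hc0 : c ≠ 0 := by
    intro h
    apply hD0
    exact leadingCoeff_eq_zero.mp (by rw [hc, h]; ring)
  set a := D.coeff 0 with ha
  set b := D.coeff 1 with hb
  set e := b / (2 * c) with he
  set r := a - e ^ 2 with hr
  set L : Polynomial K := C c * X + C e with hL
  have hD : D = C (c ^ 2) * X ^ 2 + C b * X + C a := by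
    ext n
    match n with
    | 0 => simp only [coeff_add, coeff_C_mul, coeff_X_pow, coeff_X, coeff_C]; norm_num; rfl
    | 1 => simp only [coeff_add, coeff_C_mul, coeff_X_pow, coeff_X, coeff_C]; norm_num; rfl
    | 2 => simp only [coeff_add, coeff_C_mul, coeff_X_pow, coeff_X, coeff_C, hc2]; norm_num
    | (n+3) =>
      rw [coeff_eq_zero_of_natDegree_lt (by omega : D.natDegree < n + 3)]
      simp only [coeff_add, coeff_C_mul, coeff_X_pow, coeff_X, coeff_C]; norm_num; intro h; omega
  have hbe : b = c * e + c * e := by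
    field_simp [he]
    rw [he]
    field_simp
    ring
  have hD' : D = L ^ 2 + C r := by
    rw [hD, hbe, hr, hL]
    simp only [map_add, map_mul, map_sub, map_pow]
    ring
  have hr0 : r ≠ 0 := by
    intro h
    apply hns
    exact ⟨L, by rw [hD', h]; simp⟩
  set u := 2 / r with hu
  have hu0 : u ≠ 0 := div_ne_zero h2 hr0
  refine ⟨C u * L ^ 2 + 1, C u * L, ?_, ?_⟩
  · have hL0 : L ≠ 0 := fun h => hc0 (by simpa [hL, coeff_C] using congrArg (fun p => Polynomial.coeff p 1) h)
    exact mul_ne_zero (by simpa using hu0) hL0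
  · have key : (C u * L ^ 2 + 1) ^ 2 - D * (C u * L) ^ 2
        = C (u + u - r * u ^ 2) * L ^ 2 + 1 := by
      rw [hD']
      simp only [map_add, map_mul, map_sub, map_pow]
      ring
    rw [key]
    have : u + u - r * u ^ 2 = 0 := by
      field_simp [hu]
      rw [hu]
      field_simp
      ring
    rw [this]
    simp
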